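/- Let μ ∈ (1,2) be rational, given as an irreducible fraction μ = c/d with c, d positive integers, let n ≥ 2, and suppose f^i(1/2) ≠ 1/2 for every i = 1,…,n−1. Then there exists a positive integer l with l ≤ 8 ⌈log_μ d⌉ ⌈log_μ n⌉ such that |I_{2l}| ≤ n^{−3} · μ^l · |I_l|. -/

import Mathlib

open Set MeasureTheory

/-- The tent map `f(x) = μx` for `x ≤ 1/2` and `μ(1-x)` for `x ≥ 1/2`. -/
noncomputable def tentMap (μ : ℝ) (x : ℝ) : ℝ :=
  if x ≤ 1/2 then μ * x else μ * (1 - x)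

/-- `tentBit μ x k` is the `(k+1)`-st bit `b_{k+1}` of the tent code of `x`. -/
noncomputable def tentBit (μ x : ℝ) : ℕ → Bool
  | 0 => if 1/2 ≤ x then true else false
  | k + 1 =>
    if (tentMap μ)^[k+1] x < 1/2 then tentBit μ x k
    else if 1/2 < (tentMap μ)^[k+1] x then !(tentBit μ x k)
    else true

/-- The tent code `γ^n(x) = b_1 ⋯ b_n`. -/
noncomputable def tentCode (μ : ℝ) (n : ℕ) (x : ℝ) : List Bool :=
  (List.range n).map (tentBit μ x)

/-- The tent language `L_n = {γ^n(x) : x ∈ [0,1)}`. -/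
def tentLang (μ : ℝ) (n : ℕ) : Set (List Bool) :=
  {w | ∃ x ∈ Set.Ico (0:ℝ) 1, tentCode μ n x = w}

/-- The segment-type `T(w) = {f^n(x) : x ∈ [0,1), γ^n(x) = w}`. -/
def segType (μ : ℝ) (n : ℕ) (w : List Bool) : Set ℝ :=
  {y | ∃ x ∈ Set.Ico (0:ℝ) 1, tentCode μ n x = w ∧ (tentMap μ)^[n] x = y}

/-- The set of segment-types `𝒯_n = {T(w) : w ∈ L_n}`. -/
def typeSet (μ : ℝ) (n : ℕ) : Set (Set ℝ) :=
  {S | ∃ w ∈ tentLang μ n, segType μ n w = S}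

/-- `I_i = T(γ^i(1/2))`. -/
noncomputable def Iseg (μ : ℝ) (i : ℕ) : Set ℝ :=
  segType μ i (tentCode μ i (1/2))

/-- `Ī_i = T(c̄_i)` where `c̄_i` is the bitwise complement of `γ^i(1/2)`. -/
noncomputable def Isegbar (μ : ℝ) (i : ℕ) : Set ℝ :=
  segType μ i ((tentCode μ i (1/2)).map (fun b => !b))

/-- The length of the interval `T(w)` (zero if `T(w)` is empty). -/
noncomputable def segLen (μ : ℝ) (n : ℕ) (w : List Bool) : ℝ :=
  (MeasureTheory.volume (segType μ n w)).toReal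


set_option maxHeartbeats 1000000

section TentAux

lemma tentMap_of_le {μ x : ℝ} (hx : x ≤ 1/2) : tentMap μ x = μ * x := if_pos hx

lemma tentMap_of_ge {μ x : ℝ} (hx : (1/2:ℝ) ≤ x) : tentMap μ x = μ * (1 - x) := by
  rcases eq_or_lt_of_le hx with h | h
  · rw [tentMap, if_pos h.symm.le, ← h]; norm_num
  · exact if_neg (not_le.2 h)

lemma tentMap_mem {μ x : ℝ} (hμ0 : 0 ≤ μ) (hμ2 : μ ≤ 2) (hx : x ∈ Icc (0:ℝ) 1) :
    tentMap μ x ∈ Icc (0:ℝ) 1 := by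
  obtain ⟨h0, h1⟩ := hx
  rcases le_or_gt x (1/2) with h | h
  · rw [tentMap_of_le h]; constructor <;> nlinarith
  · rw [tentMap_of_ge h.le]; constructor <;> nlinarith

lemma iter_mem {μ x : ℝ} (hμ0 : 0 ≤ μ) (hμ2 : μ ≤ 2) (hx : x ∈ Icc (0:ℝ) 1) (i : ℕ) :
    (tentMap μ)^[i] x ∈ Icc (0:ℝ) 1 := by
  induction i with
  | zero => simpa
  | succ k ih => rw [Function.iterate_succ_apply']; exact tentMap_mem hμ0 hμ2 ih

lemma half_mem_Icc : (1/2:ℝ) ∈ Icc (0:ℝ) 1 := by norm_num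

lemma code_eq_iff {μ : ℝ} {n : ℕ} {x y : ℝ} :
    tentCode μ n x = tentCode μ n y ↔ ∀ k < n, tentBit μ x k = tentBit μ y k := by
  unfold tentCode
  rw [List.map_inj_left]
  simp

lemma tentBit_succ (μ x : ℝ) (k : ℕ) : tentBit μ x (k+1) =
    (if (tentMap μ)^[k+1] x < 1/2 then tentBit μ x k
    else if 1/2 < (tentMap μ)^[k+1] x then !(tentBit μ x k)
    else true) := rfl

lemma orbit_rat {μ : ℝ} {c d : ℕ} (hd : 0 < d) (hμcd : μ = c / d)
    (hμ0 : 0 ≤ μ) (hμ2 : μ ≤ 2) (i : ℕ) :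
    ∃ a : ℕ, ((tentMap μ)^[i] (1/2)) * (2 * (d:ℝ)^i) = a := by
  have hd' : (0:ℝ) < d := by exact_mod_cast hd
  have hμd : μ * d = c := by rw [hμcd]; field_simp
  induction i with
  | zero => exact ⟨1, by norm_num⟩
  | succ k ih =>
    obtain ⟨a, ha⟩ := ih
    have hmem := iter_mem hμ0 hμ2 half_mem_Icc k
    rw [Function.iterate_succ_apply']
    set y := (tentMap μ)^[k] (1/2) with hy
    rcases le_or_gt y (1/2) with h | h
    · refine ⟨c * a, ?_⟩
      rw [tentMap_of_le h]
      push_cast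
      linear_combination (2*y*(d:ℝ)^k) * hμd + (c:ℝ) * ha
    · have ha' : a ≤ 2 * d^k := by
        have : (a:ℝ) ≤ 2 * (d:ℝ)^k := by
          rw [← ha]; nlinarith [hmem.2, pow_pos hd' k]
        exact_mod_cast this
      refine ⟨c * (2*d^k - a), ?_⟩
      rw [tentMap_of_ge h.le]
      push_cast [Nat.cast_sub ha']
      linear_combination (2*(1-y)*(d:ℝ)^k) * hμd - (c:ℝ) * ha

def Jset (μ : ℝ) (i : ℕ) : Set ℝ :=
  {x | x ∈ Set.Ico (0:ℝ) 1 ∧ tentCode μ i x = tentCode μ i (1/2)}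

lemma half_mem_Jset {μ : ℝ} (i : ℕ) : (1/2:ℝ) ∈ Jset μ i :=
  ⟨⟨by norm_num, by norm_num⟩, rfl⟩

lemma Jset_anti {μ : ℝ} {i j : ℕ} (h : i ≤ j) : Jset μ j ⊆ Jset μ i := by
  intro x hx
  exact ⟨hx.1, code_eq_iff.2 fun k hk => code_eq_iff.1 hx.2 k (lt_of_lt_of_le hk h)⟩

lemma mem_Jset_succ {μ : ℝ} {k : ℕ} {x : ℝ} :
    x ∈ Jset μ (k+1) ↔ x ∈ Jset μ k ∧ tentBit μ x k = tentBit μ (1/2) k := by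
  simp only [Jset, Set.mem_setOf_eq, code_eq_iff, Nat.forall_lt_succ_right]
  tauto

lemma Jset_one {μ : ℝ} : Jset μ 1 = Set.Ico (1/2:ℝ) 1 := by
  ext x
  simp only [Jset, Set.mem_setOf_eq, code_eq_iff, Nat.lt_one_iff, forall_eq, Set.mem_Ico]
  constructor
  · rintro ⟨⟨h0, h1⟩, hb⟩
    refine ⟨?_, h1⟩
    by_contra h
    push_neg at h
    simp only [tentBit, if_neg (not_le.2 h), if_pos le_rfl] at hb
    exact Bool.false_ne_true hb
  · rintro ⟨h2, h1⟩
    refine ⟨⟨by linarith, h1⟩, ?_⟩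
    simp only [tentBit, if_pos h2, if_pos le_rfl]

def Good (μ : ℝ) (c : ℕ) (i : ℕ) (t σ : ℝ) : Prop :=
  (σ = 1 ∨ σ = -1) ∧ 0 ≤ t ∧ t ≤ 1/2 ∧
  Set.Ico (1/2:ℝ) (1/2+t) ⊆ Jset μ i ∧ Jset μ i ⊆ Set.Icc (1/2:ℝ) (1/2+t) ∧
  (∀ x ∈ Set.Icc (1/2:ℝ) (1/2+t),
     (tentMap μ)^[i] x = (tentMap μ)^[i] (1/2) + σ * μ^i * (x - 1/2)) ∧
  ((tentMap μ)^[i] (1/2) + σ * μ^i * t ∈ Set.Icc (0:ℝ) 1) ∧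
  (∃ m : ℕ, 2 * (c:ℝ)^i * t = (m:ℝ))

lemma good_one {μ : ℝ} (c : ℕ) : Good μ c 1 (1/2) (-1) := by
  refine ⟨Or.inr rfl, by norm_num, le_rfl, ?_, ?_, ?_, ?_, ⟨c, by push_cast; ring⟩⟩
  · rw [Jset_one]; norm_num
  · rw [Jset_one]; intro x hx; exact ⟨hx.1, by norm_num; linarith [hx.2]⟩
  · intro x hx
    simp only [Function.iterate_one]
    rw [tentMap_of_ge hx.1, tentMap_of_ge (le_refl (1/2:ℝ))]
    ring
  · simp only [Function.iterate_one]
    rw [tentMap_of_ge (le_refl (1/2:ℝ))]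
    norm_num

lemma good_succ {μ : ℝ} {c d : ℕ} (hd : 0 < d) (hμ1 : 1 < μ) (hμ2 : μ < 2)
    (hμcd : μ = c / d) {k : ℕ} {t σ : ℝ} (hg : Good μ c (k+1) t σ) :
    ∃ t' σ', t' ≤ t ∧ Good μ c (k+1+1) t' σ' := by
  obtain ⟨hσ, ht0, ht2, hlow, hupp, hfor, hfar, m0, hD⟩ := hg
  have hμ0 : (0:ℝ) < μ := lt_trans one_pos hμ1
  have hd' : (0:ℝ) < d := by exact_mod_cast hd
  have hμd : μ * d = c := by rw [hμcd]; field_simp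
  have hpow : (0:ℝ) < μ^(k+1) := pow_pos hμ0 (k+1)
  have hci : (c:ℝ)^(k+1+1) = μ^(k+1+1) * (d:ℝ)^(k+1+1) := by
    rw [← mul_pow, hμd]
  set y₀ := (tentMap μ)^[k+1] (1/2) with hy₀def
  have hy₀mem : y₀ ∈ Icc (0:ℝ) 1 := iter_mem hμ0.le hμ2.le half_mem_Icc (k+1)
  set β := tentBit μ (1/2) k with hβdef
  have hbitx : ∀ x ∈ Jset μ (k+1), tentBit μ x (k+1) =
      (if (tentMap μ)^[k+1] x < 1/2 then β
       else if 1/2 < (tentMap μ)^[k+1] x then !β else true) := by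
    intro x hx
    have hprev : tentBit μ x k = β := code_eq_iff.1 hx.2 k (Nat.lt_succ_self k)
    rw [tentBit_succ, hprev]
  have hbith : tentBit μ (1/2) (k+1) =
      (if y₀ < 1/2 then β else if 1/2 < y₀ then !β else true) := by
    rw [tentBit_succ, ← hy₀def, ← hβdef]
  -- choose side
  have hside :
      (y₀ ≤ 1/2 ∧ (∀ x ∈ Jset μ (k+1), (tentMap μ)^[k+1] x < 1/2 → x ∈ Jset μ (k+1+1)) ∧
        (∀ x ∈ Jset μ (k+1+1), (tentMap μ)^[k+1] x ≤ 1/2)) ∨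
      ((1/2:ℝ) ≤ y₀ ∧ (∀ x ∈ Jset μ (k+1), 1/2 < (tentMap μ)^[k+1] x → x ∈ Jset μ (k+1+1)) ∧
        (∀ x ∈ Jset μ (k+1+1), (1/2:ℝ) ≤ (tentMap μ)^[k+1] x)) := by
    rcases lt_trichotomy y₀ (1/2 : ℝ) with hy | hy | hy
    · refine Or.inl ⟨hy.le, ?_, ?_⟩
      · intro x hx hlt
        exact mem_Jset_succ.2 ⟨hx, by rw [hbitx x hx, hbith, if_pos hlt, if_pos hy]⟩
      · intro x hx
        have hx' := mem_Jset_succ.1 hx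
        by_contra hgt
        push_neg at hgt
        have hb := hx'.2
        rw [hbitx x hx'.1, hbith, if_neg (not_lt.2 hgt.le), if_pos hgt, if_pos hy] at hb
        simp at hb
    · cases hβv : β with
      | true =>
        refine Or.inl ⟨hy.le, ?_, ?_⟩
        · intro x hx hlt
          refine mem_Jset_succ.2 ⟨hx, ?_⟩
          rw [hbitx x hx, hbith, if_pos hlt, if_neg (by rw [hy]; exact lt_irrefl _),
            if_neg (by rw [hy]; exact lt_irrefl _)]
          exact hβv
        · intro x hx
          have hx' := mem_Jset_succ.1 hx
          by_contra hgt
          push_neg at hgt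
          have hb := hx'.2
          rw [hbitx x hx'.1, hbith, if_neg (not_lt.2 hgt.le), if_pos hgt,
            if_neg (by rw [hy]; exact lt_irrefl _), if_neg (by rw [hy]; exact lt_irrefl _),
            hβv] at hb
          simp at hb
      | false =>
        refine Or.inr ⟨hy.ge, ?_, ?_⟩
        · intro x hx hlt
          refine mem_Jset_succ.2 ⟨hx, ?_⟩
          rw [hbitx x hx, hbith, if_neg (not_lt.2 hlt.le), if_pos hlt,
            if_neg (by rw [hy]; exact lt_irrefl _), if_neg (by rw [hy]; exact lt_irrefl _),
            hβv]
          rfl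
        · intro x hx
          have hx' := mem_Jset_succ.1 hx
          by_contra hgt
          push_neg at hgt
          have hb := hx'.2
          rw [hbitx x hx'.1, hbith, if_pos hgt,
            if_neg (by rw [hy]; exact lt_irrefl _), if_neg (by rw [hy]; exact lt_irrefl _),
            hβv] at hb
          simp at hb
    · refine Or.inr ⟨hy.le, ?_, ?_⟩
      · intro x hx hlt
        refine mem_Jset_succ.2 ⟨hx, ?_⟩
        rw [hbitx x hx, hbith, if_neg (not_lt.2 hlt.le), if_pos hlt,
          if_neg (not_lt.2 hy.le), if_pos hy]
      · intro x hx
        have hx' := mem_Jset_succ.1 hx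
        by_contra hgt
        push_neg at hgt
        have hb := hx'.2
        rw [hbitx x hx'.1, hbith, if_pos hgt, if_neg (not_lt.2 hy.le), if_pos hy] at hb
        simp at hb
  rcases hside with ⟨hy, hS1, hS2⟩ | ⟨hy, hS1, hS2⟩
  · -- keep-left side: y₀ ≤ 1/2
    rcases hσ with rfl | rfl
    · -- σ = 1 : cut case
      simp only [one_mul] at hfor hfar
      set δ := (1/2 - y₀) / μ^(k+1) with hδdef
      have hδ0 : 0 ≤ δ := div_nonneg (by linarith) hpow.le
      have hδμ : δ * μ^(k+1) = 1/2 - y₀ := div_mul_cancel₀ _ hpow.ne'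
      have htt : min t δ ≤ t := min_le_left _ _
      have htδ : min t δ ≤ δ := min_le_right _ _
      have ht'0 : 0 ≤ min t δ := le_min ht0 hδ0
      have hform : ∀ x ∈ Icc (1/2:ℝ) (1/2 + min t δ),
          (tentMap μ)^[k+1+1] x = (tentMap μ)^[k+1+1] (1/2) + 1 * μ^(k+1+1) * (x - 1/2) := by
        intro x hx
        have hxI : x ∈ Icc (1/2:ℝ) (1/2+t) := ⟨hx.1, by linarith [hx.2]⟩
        have hxd : x - 1/2 ≤ δ := by linarith [hx.2]
        have h8 : μ^(k+1) * (x - 1/2) ≤ μ^(k+1) * δ := mul_le_mul_of_nonneg_left hxd hpow.le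
        have h9 : μ^(k+1) * δ = 1/2 - y₀ := by rw [mul_comm]; exact hδμ
        have hgx : y₀ + μ^(k+1) * (x - 1/2) ≤ 1/2 := by linarith
        rw [Function.iterate_succ_apply' (tentMap μ) (k+1) x,
          Function.iterate_succ_apply' (tentMap μ) (k+1) (1/2), hfor x hxI, ← hy₀def,
          tentMap_of_le hgx, tentMap_of_le hy]
        ring
      have hfarnew : (tentMap μ)^[k+1+1] (1/2) + 1 * μ^(k+1+1) * (min t δ) ∈ Icc (0:ℝ) 1 := by
        have h2 := hform (1/2 + min t δ) ⟨by linarith, le_rfl⟩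
        have h3 : (1/2:ℝ) + min t δ ∈ Icc (1/2:ℝ) (1/2 + t) := ⟨by linarith, by linarith⟩
        have h4 : (tentMap μ)^[k+1+1] (1/2 + min t δ) = tentMap μ (y₀ + μ^(k+1) * min t δ) := by
          rw [Function.iterate_succ_apply' (tentMap μ) (k+1) (1/2 + min t δ), hfor _ h3]
          congr 1
          ring
        have h5 : y₀ + μ^(k+1) * min t δ ∈ Icc (0:ℝ) 1 := by
          constructor
          · nlinarith [hy₀mem.1, mul_nonneg hpow.le ht'0]
          · nlinarith [hfar.2, mul_le_mul_of_nonneg_left htt hpow.le]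
        have h6 := tentMap_mem hμ0.le hμ2.le h5
        have h7 : (tentMap μ)^[k+1+1] (1/2) + 1 * μ^(k+1+1) * (min t δ)
            = tentMap μ (y₀ + μ^(k+1) * min t δ) := by rw [← h4, h2]; ring
        rw [h7]; exact h6
      refine ⟨min t δ, 1, htt, Or.inl rfl, ht'0, le_trans htt ht2, ?_, ?_, hform, hfarnew, ?_⟩
      · intro x hx
        rcases eq_or_lt_of_le hx.1 with heq | hxgt
        · rw [← heq]; exact half_mem_Jset _
        · have hxJ : x ∈ Jset μ (k+1) := hlow ⟨hx.1, lt_of_lt_of_le hx.2 (by linarith)⟩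
          apply hS1 x hxJ
          have hxI : x ∈ Icc (1/2:ℝ) (1/2+t) := ⟨hx.1, by linarith [hx.2]⟩
          rw [hfor x hxI]
          have hxd : x - 1/2 < δ := by linarith [hx.2]
          have h8 : μ^(k+1) * (x - 1/2) < μ^(k+1) * δ := by
            exact mul_lt_mul_of_pos_left hxd hpow
          have h9 : μ^(k+1) * δ = 1/2 - y₀ := by rw [mul_comm]; exact hδμ
          linarith
      · intro x hx
        have hxi : x ∈ Jset μ (k+1) := Jset_anti (Nat.le_succ _) hx
        have hxI := hupp hxi
        refine ⟨hxI.1, ?_⟩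
        have hle2 := hS2 x hx
        rw [hfor x hxI] at hle2
        have h8 : μ^(k+1) * (x-1/2) ≤ μ^(k+1) * δ := by
          rw [mul_comm (μ^(k+1)) δ, hδμ]; linarith
        have hxd : x - 1/2 ≤ δ := le_of_mul_le_mul_left h8 hpow
        rcases min_cases t δ with ⟨h1, _⟩ | ⟨h1, _⟩ <;> rw [h1] <;> linarith [hxI.2]
      · rcases min_cases t δ with ⟨h1, _⟩ | ⟨h1, _⟩ <;> rw [h1]
        · exact ⟨c * m0, by push_cast; linear_combination (c:ℝ) * hD⟩
        · obtain ⟨a, ha⟩ := orbit_rat hd hμcd hμ0.le hμ2.le (k+1)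
          have haled : a ≤ d^(k+1) := by
            have h10 : (a:ℝ) ≤ (d:ℝ)^(k+1) := by
              rw [← ha]; nlinarith [pow_pos hd' (k+1)]
            exact_mod_cast h10
          refine ⟨c * (d^(k+1) - a), ?_⟩
          rw [hci]
          push_cast [Nat.cast_sub haled]
          linear_combination (2*μ*(d:ℝ)^(k+1+1)) * hδμ + ((d:ℝ)^(k+1) - (a:ℝ)) * hμd - μ*(d:ℝ)*ha
    · -- σ = -1 : keep all
      have hform : ∀ x ∈ Icc (1/2:ℝ) (1/2 + t),
          (tentMap μ)^[k+1+1] x = (tentMap μ)^[k+1+1] (1/2) + (-1) * μ^(k+1+1) * (x - 1/2) := by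
        intro x hx
        have hgx : y₀ + (-1) * μ^(k+1) * (x - 1/2) ≤ 1/2 := by
          nlinarith [mul_nonneg hpow.le (show (0:ℝ) ≤ x - 1/2 by linarith [hx.1])]
        rw [Function.iterate_succ_apply' (tentMap μ) (k+1) x,
          Function.iterate_succ_apply' (tentMap μ) (k+1) (1/2), hfor x hx, ← hy₀def,
          tentMap_of_le hgx, tentMap_of_le hy]
        ring
      have hfarnew : (tentMap μ)^[k+1+1] (1/2) + (-1) * μ^(k+1+1) * t ∈ Icc (0:ℝ) 1 := by
        have h2 := hform (1/2 + t) ⟨by linarith, le_rfl⟩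
        have h4 : (tentMap μ)^[k+1+1] (1/2 + t) = tentMap μ (y₀ + (-1) * μ^(k+1) * t) := by
          rw [Function.iterate_succ_apply' (tentMap μ) (k+1) (1/2 + t), hfor _ ⟨by linarith, le_rfl⟩]
          congr 1
          ring
        have h6 := tentMap_mem hμ0.le hμ2.le hfar
        have h7 : (tentMap μ)^[k+1+1] (1/2) + (-1) * μ^(k+1+1) * t
            = tentMap μ (y₀ + (-1) * μ^(k+1) * t) := by rw [← h4, h2]; ring
        rw [h7]; exact h6
      refine ⟨t, -1, le_rfl, Or.inr rfl, ht0, ht2, ?_,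
        (fun x hx => hupp (Jset_anti (Nat.le_succ _) hx)), hform, hfarnew, ⟨c * m0, by push_cast; linear_combination (c:ℝ) * hD⟩⟩
      · intro x hx
        rcases eq_or_lt_of_le hx.1 with heq | hxgt
        · rw [← heq]; exact half_mem_Jset _
        · have hxJ : x ∈ Jset μ (k+1) := hlow hx
          apply hS1 x hxJ
          rw [hfor x ⟨hx.1, hx.2.le⟩]
          nlinarith [mul_pos hpow (show (0:ℝ) < x - 1/2 by linarith)]
  · -- keep-right side: 1/2 ≤ y₀
    rcases hσ with rfl | rfl
    · -- σ = 1 : keep all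
      simp only [one_mul] at hfor hfar
      have hform : ∀ x ∈ Icc (1/2:ℝ) (1/2 + t),
          (tentMap μ)^[k+1+1] x = (tentMap μ)^[k+1+1] (1/2) + (-1) * μ^(k+1+1) * (x - 1/2) := by
        intro x hx
        have hgx : (1/2:ℝ) ≤ y₀ + μ^(k+1) * (x - 1/2) := by
          nlinarith [mul_nonneg hpow.le (show (0:ℝ) ≤ x - 1/2 by linarith [hx.1])]
        rw [Function.iterate_succ_apply' (tentMap μ) (k+1) x,
          Function.iterate_succ_apply' (tentMap μ) (k+1) (1/2), hfor x hx, ← hy₀def,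
          tentMap_of_ge hgx, tentMap_of_ge hy]
        ring
      have hfarnew : (tentMap μ)^[k+1+1] (1/2) + (-1) * μ^(k+1+1) * t ∈ Icc (0:ℝ) 1 := by
        have h2 := hform (1/2 + t) ⟨by linarith, le_rfl⟩
        have h4 : (tentMap μ)^[k+1+1] (1/2 + t) = tentMap μ (y₀ + μ^(k+1) * t) := by
          rw [Function.iterate_succ_apply' (tentMap μ) (k+1) (1/2 + t), hfor _ ⟨by linarith, le_rfl⟩]
          congr 1
          ring
        have h6 := tentMap_mem hμ0.le hμ2.le hfar
        have h7 : (tentMap μ)^[k+1+1] (1/2) + (-1) * μ^(k+1+1) * t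
            = tentMap μ (y₀ + μ^(k+1) * t) := by rw [← h4, h2]; ring
        rw [h7]; exact h6
      refine ⟨t, -1, le_rfl, Or.inr rfl, ht0, ht2, ?_,
        (fun x hx => hupp (Jset_anti (Nat.le_succ _) hx)), hform, hfarnew, ⟨c * m0, by push_cast; linear_combination (c:ℝ) * hD⟩⟩
      · intro x hx
        rcases eq_or_lt_of_le hx.1 with heq | hxgt
        · rw [← heq]; exact half_mem_Jset _
        · have hxJ : x ∈ Jset μ (k+1) := hlow hx
          apply hS1 x hxJ
          rw [hfor x ⟨hx.1, hx.2.le⟩]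
          nlinarith [mul_pos hpow (show (0:ℝ) < x - 1/2 by linarith)]
    · -- σ = -1 : cut case
      set δ := (y₀ - 1/2) / μ^(k+1) with hδdef
      have hδ0 : 0 ≤ δ := div_nonneg (by linarith) hpow.le
      have hδμ : δ * μ^(k+1) = y₀ - 1/2 := div_mul_cancel₀ _ hpow.ne'
      have htt : min t δ ≤ t := min_le_left _ _
      have htδ : min t δ ≤ δ := min_le_right _ _
      have ht'0 : 0 ≤ min t δ := le_min ht0 hδ0
      have hform : ∀ x ∈ Icc (1/2:ℝ) (1/2 + min t δ),
          (tentMap μ)^[k+1+1] x = (tentMap μ)^[k+1+1] (1/2) + 1 * μ^(k+1+1) * (x - 1/2) := by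
        intro x hx
        have hxI : x ∈ Icc (1/2:ℝ) (1/2+t) := ⟨hx.1, by linarith [hx.2]⟩
        have hxd : x - 1/2 ≤ δ := by linarith [hx.2]
        have h8 : μ^(k+1) * (x - 1/2) ≤ μ^(k+1) * δ := mul_le_mul_of_nonneg_left hxd hpow.le
        have h9 : μ^(k+1) * δ = y₀ - 1/2 := by rw [mul_comm]; exact hδμ
        have hgx : (1/2:ℝ) ≤ y₀ + (-1) * μ^(k+1) * (x - 1/2) := by linarith
        rw [Function.iterate_succ_apply' (tentMap μ) (k+1) x,
          Function.iterate_succ_apply' (tentMap μ) (k+1) (1/2), hfor x hxI, ← hy₀def,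
          tentMap_of_ge hgx, tentMap_of_ge hy]
        ring
      have hfarnew : (tentMap μ)^[k+1+1] (1/2) + 1 * μ^(k+1+1) * (min t δ) ∈ Icc (0:ℝ) 1 := by
        have h2 := hform (1/2 + min t δ) ⟨by linarith, le_rfl⟩
        have h3 : (1/2:ℝ) + min t δ ∈ Icc (1/2:ℝ) (1/2 + t) := ⟨by linarith, by linarith⟩
        have h4 : (tentMap μ)^[k+1+1] (1/2 + min t δ)
            = tentMap μ (y₀ + (-1) * μ^(k+1) * min t δ) := by
          rw [Function.iterate_succ_apply' (tentMap μ) (k+1) (1/2 + min t δ), hfor _ h3]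
          congr 1
          ring
        have h5 : y₀ + (-1) * μ^(k+1) * min t δ ∈ Icc (0:ℝ) 1 := by
          have h8 : μ^(k+1) * (min t δ) ≤ μ^(k+1) * δ := mul_le_mul_of_nonneg_left htδ hpow.le
          have h9 : μ^(k+1) * δ = y₀ - 1/2 := by rw [mul_comm]; exact hδμ
          constructor
          · linarith
          · nlinarith [hy₀mem.2, mul_nonneg hpow.le ht'0]
        have h6 := tentMap_mem hμ0.le hμ2.le h5
        have h7 : (tentMap μ)^[k+1+1] (1/2) + 1 * μ^(k+1+1) * (min t δ)
            = tentMap μ (y₀ + (-1) * μ^(k+1) * min t δ) := by rw [← h4, h2]; ring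
        rw [h7]; exact h6
      refine ⟨min t δ, 1, htt, Or.inl rfl, ht'0, le_trans htt ht2, ?_, ?_, hform, hfarnew, ?_⟩
      · intro x hx
        rcases eq_or_lt_of_le hx.1 with heq | hxgt
        · rw [← heq]; exact half_mem_Jset _
        · have hxJ : x ∈ Jset μ (k+1) := hlow ⟨hx.1, lt_of_lt_of_le hx.2 (by linarith)⟩
          apply hS1 x hxJ
          have hxI : x ∈ Icc (1/2:ℝ) (1/2+t) := ⟨hx.1, by linarith [hx.2]⟩
          rw [hfor x hxI]
          have hxd : x - 1/2 < δ := by linarith [hx.2]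
          have h8 : μ^(k+1) * (x - 1/2) < μ^(k+1) * δ := mul_lt_mul_of_pos_left hxd hpow
          have h9 : μ^(k+1) * δ = y₀ - 1/2 := by rw [mul_comm]; exact hδμ
          linarith
      · intro x hx
        have hxi : x ∈ Jset μ (k+1) := Jset_anti (Nat.le_succ _) hx
        have hxI := hupp hxi
        refine ⟨hxI.1, ?_⟩
        have hle2 := hS2 x hx
        rw [hfor x hxI] at hle2
        have h8 : μ^(k+1) * (x-1/2) ≤ μ^(k+1) * δ := by
          rw [mul_comm (μ^(k+1)) δ, hδμ]; linarith
        have hxd : x - 1/2 ≤ δ := le_of_mul_le_mul_left h8 hpow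
        rcases min_cases t δ with ⟨h1, _⟩ | ⟨h1, _⟩ <;> rw [h1] <;> linarith [hxI.2]
      · rcases min_cases t δ with ⟨h1, _⟩ | ⟨h1, _⟩ <;> rw [h1]
        · exact ⟨c * m0, by push_cast; linear_combination (c:ℝ) * hD⟩
        · obtain ⟨a, ha⟩ := orbit_rat hd hμcd hμ0.le hμ2.le (k+1)
          have haled : d^(k+1) ≤ a := by
            have h10 : (d:ℝ)^(k+1) ≤ (a:ℝ) := by
              rw [← ha]; nlinarith [pow_pos hd' (k+1)]
            exact_mod_cast h10
          refine ⟨c * (a - d^(k+1)), ?_⟩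
          rw [hci]
          push_cast [Nat.cast_sub haled]
          linear_combination (2*μ*(d:ℝ)^(k+1+1)) * hδμ + ((a:ℝ) - (d:ℝ)^(k+1)) * hμd + μ*(d:ℝ)*ha

lemma Iseg_eq (μ : ℝ) (i : ℕ) : Iseg μ i = (tentMap μ)^[i] '' Jset μ i := by
  ext y
  simp only [Iseg, segType, Jset, Set.mem_image, Set.mem_setOf_eq]
  constructor
  · rintro ⟨x, hx, hc, hf⟩; exact ⟨x, ⟨hx, hc⟩, hf⟩
  · rintro ⟨x, ⟨hx, hc⟩, hf⟩; exact ⟨x, hx, hc, hf⟩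

lemma volume_affine_Icc {A B σ a b : ℝ} (hA : 0 < A) (hσ : σ = 1 ∨ σ = -1) :
    volume ((fun x => B + σ * A * (x - 1/2)) '' Icc a b) = ENNReal.ofReal (A * (b - a)) := by
  rcases hσ with rfl | rfl
  · have h2 : (fun x : ℝ => B + 1 * A * (x - 1/2)) = (fun x : ℝ => A * x + (B - A/2)) := by
      funext x; ring
    rw [h2, Set.image_affine_Icc' hA, Real.volume_Icc]
    congr 1
    ring
  · have h2 : (fun x : ℝ => B + (-1) * A * (x - 1/2)) =
        (fun z : ℝ => A * z + (B + A/2)) ∘ Neg.neg := by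
      funext x; simp only [Function.comp_apply]; ring
    rw [h2, Set.image_comp, Set.image_neg_Icc, Set.image_affine_Icc' hA, Real.volume_Icc]
    congr 1
    ring

lemma volume_affine_Ico {A B σ a b : ℝ} (hA : 0 < A) (hσ : σ = 1 ∨ σ = -1) :
    volume ((fun x => B + σ * A * (x - 1/2)) '' Ico a b) = ENNReal.ofReal (A * (b - a)) := by
  rcases hσ with rfl | rfl
  · have h2 : (fun x : ℝ => B + 1 * A * (x - 1/2)) = (fun x : ℝ => A * x + (B - A/2)) := by
      funext x; ring
    rw [h2, Set.image_affine_Ico hA, Real.volume_Ico]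
    congr 1
    ring
  · have h2 : (fun x : ℝ => B + (-1) * A * (x - 1/2)) =
        (fun z : ℝ => A * z + (B + A/2)) ∘ Neg.neg := by
      funext x; simp only [Function.comp_apply]; ring
    rw [h2, Set.image_comp, Set.image_neg_Ico, Set.image_affine_Ioc hA, Real.volume_Ioc]
    congr 1
    ring

lemma volume_Iseg {μ : ℝ} {c : ℕ} {i : ℕ} {t σ : ℝ} (hμ0 : 0 < μ)
    (hg : Good μ c i t σ) :
    volume (Iseg μ i) = ENNReal.ofReal (μ^i * t) := by
  obtain ⟨hσ, ht0, ht2, hlow, hupp, hfor, hfar, hD⟩ := hg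
  have hpow : (0:ℝ) < μ^i := pow_pos hμ0 i
  set y₀ := (tentMap μ)^[i] (1/2) with hy₀def
  rw [Iseg_eq]
  apply le_antisymm
  · have h1 : (tentMap μ)^[i] '' Jset μ i ⊆
        (fun x => y₀ + σ * μ^i * (x - 1/2)) '' Icc (1/2) (1/2+t) := by
      rintro y ⟨x, hx, hfx⟩
      exact ⟨x, hupp hx,
        show y₀ + σ * μ ^ i * (x - 1/2) = y by rw [← hfor x (hupp hx)]; exact hfx⟩
    calc volume ((tentMap μ)^[i] '' Jset μ i)
        ≤ volume ((fun x => y₀ + σ * μ^i * (x - 1/2)) '' Icc (1/2) (1/2+t)) :=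
          measure_mono h1
      _ = ENNReal.ofReal (μ^i * ((1/2+t) - 1/2)) := volume_affine_Icc hpow hσ
      _ = ENNReal.ofReal (μ^i * t) := by norm_num
  · have h1 : (fun x => y₀ + σ * μ^i * (x - 1/2)) '' Ico (1/2) (1/2+t) ⊆
        (tentMap μ)^[i] '' Jset μ i := by
      rintro y ⟨x, hx, hfx⟩
      refine ⟨x, hlow hx, ?_⟩
      rw [hfor x ⟨hx.1, hx.2.le⟩]
      exact hfx
    calc ENNReal.ofReal (μ^i * t)
        = ENNReal.ofReal (μ^i * ((1/2+t) - 1/2)) := by norm_num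
      _ = volume ((fun x => y₀ + σ * μ^i * (x - 1/2)) '' Ico (1/2) (1/2+t)) :=
          (volume_affine_Ico hpow hσ).symm
      _ ≤ volume ((tentMap μ)^[i] '' Jset μ i) := measure_mono h1

lemma good_t_le {μ : ℝ} {c : ℕ} {i j : ℕ} {t σ t' σ' : ℝ} (hij : i ≤ j)
    (h1 : Good μ c i t σ) (h2 : Good μ c j t' σ') : t' ≤ t := by
  obtain ⟨-, ht0, -, -, hupp, -, -, -⟩ := h1
  obtain ⟨-, ht0', -, hlow', -, -, -, -⟩ := h2
  by_contra h
  push_neg at h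
  have hx : (1/2 + (t + t')/2 : ℝ) ∈ Ico (1/2:ℝ) (1/2 + t') := ⟨by linarith, by linarith⟩
  have := (hupp (Jset_anti hij (hlow' hx))).2
  linarith

lemma good_t_upper {μ : ℝ} {c : ℕ} {i : ℕ} {t σ : ℝ} (hμ0 : 0 < μ) (hμ2 : μ ≤ 2)
    (hg : Good μ c i t σ) : μ^i * t ≤ 1 := by
  obtain ⟨hσ, ht0, ht2, -, -, -, hfar, -⟩ := hg
  have hy₀mem := iter_mem hμ0.le hμ2 half_mem_Icc (μ := μ) (x := 1/2) i
  rcases hσ with rfl | rfl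
  · have := hfar.2; have := hy₀mem.1; linarith
  · have := hfar.1; have := hy₀mem.2; linarith

lemma good_t_lower {μ : ℝ} {c : ℕ} {i : ℕ} {t σ : ℝ} (hc : 0 < c)
    (hg : Good μ c i t σ) (ht : t ≠ 0) : 1 ≤ 2 * (c:ℝ)^i * t := by
  obtain ⟨-, ht0, -, -, -, -, -, m, hm⟩ := hg
  have hc' : (0:ℝ) < (c:ℝ)^i := pow_pos (by exact_mod_cast hc) i
  have ht' : 0 < t := lt_of_le_of_ne ht0 (Ne.symm ht)
  have hm0 : (0:ℝ) < m := by rw [← hm]; positivity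
  have hm1 : 1 ≤ m := by exact_mod_cast hm0
  have h2 : (1:ℝ) ≤ (m:ℝ) := by exact_mod_cast hm1
  linarith [hm]

lemma good_exists {μ : ℝ} {c d : ℕ} (hd : 0 < d) (hμ1 : 1 < μ) (hμ2 : μ < 2)
    (hμcd : μ = (c:ℝ) / d) (i : ℕ) (hi : 1 ≤ i) : ∃ t σ, Good μ c i t σ := by
  obtain ⟨k, rfl⟩ : ∃ k, i = k + 1 := ⟨i - 1, by omega⟩
  clear hi
  induction k with
  | zero => exact ⟨1/2, -1, good_one c⟩
  | succ j ih =>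
    obtain ⟨t, σ, hg⟩ := ih
    obtain ⟨t', σ', -, hg'⟩ := good_succ hd hμ1 hμ2 hμcd hg
    exact ⟨t', σ', hg'⟩

end TentAux

/-- existence of `l ≤ 8⌈log_μ d⌉⌈log_μ n⌉` with
`|I_{2l}| ≤ n^{-3} μ^l |I_l|`. -/
theorem exists_short_level (μ : ℝ) (hμ1 : 1 < μ) (hμ2 : μ < 2)
    (c d : ℕ) (hc : 0 < c) (hd : 0 < d) (hcd : Nat.Coprime c d)
    (hμ : μ = (c : ℝ) / d) (n : ℕ) (hn : 2 ≤ n)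
    (hcrit : ∀ i : ℕ, 1 ≤ i → i ≤ n - 1 → (tentMap μ)^[i] (1/2) ≠ 1/2) :
    ∃ l : ℕ, 0 < l ∧ l ≤ 8 * ⌈Real.logb μ d⌉₊ * ⌈Real.logb μ n⌉₊ ∧
      (volume (Iseg μ (2*l))).toReal ≤
        ((n : ℝ) ^ 3)⁻¹ * μ ^ l * (volume (Iseg μ l)).toReal := by
  have hμ0 : (0:ℝ) < μ := lt_trans one_pos hμ1
  have hμne : μ ≠ 1 := ne_of_gt hμ1
  set D := ⌈Real.logb μ d⌉₊ with hDdef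
  set m := ⌈Real.logb μ n⌉₊ with hmdef
  -- d ≥ 2
  have hd2 : 2 ≤ d := by
    rcases Nat.lt_or_ge d 2 with h | h
    · exfalso
      have hd1 : d = 1 := by omega
      rw [hd1] at hμ
      norm_num at hμ
      have hc1 : (1:ℝ) < (c:ℝ) := by rw [← hμ]; exact hμ1
      have hc1' : 1 < c := by exact_mod_cast hc1
      have h2c : (2:ℝ) ≤ (c:ℝ) := by exact_mod_cast hc1'
      rw [hμ] at hμ2; linarith
    · exact h
  have hn1 : (1:ℝ) < n := by exact_mod_cast lt_of_lt_of_le one_lt_two hn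
  have hd1 : (1:ℝ) < d := by exact_mod_cast hd2
  have hm1 : 1 ≤ m := Nat.ceil_pos.2 (Real.logb_pos hμ1 hn1)
  have hD1 : 1 ≤ D := Nat.ceil_pos.2 (Real.logb_pos hμ1 hd1)
  -- n ≤ μ^m and d ≤ μ^D
  have hmun : (n:ℝ) ≤ μ^m := by
    have h1 : Real.logb μ n ≤ (m:ℝ) := Nat.le_ceil _
    calc (n:ℝ) = μ ^ (Real.logb μ n) := (Real.rpow_logb hμ0 hμne (by positivity)).symm
      _ ≤ μ ^ ((m:ℝ)) := (Real.rpow_le_rpow_left_iff hμ1).2 h1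
      _ = μ ^ m := Real.rpow_natCast μ m
  have hdud : (d:ℝ) ≤ μ^D := by
    have h1 : Real.logb μ d ≤ (D:ℝ) := Nat.le_ceil _
    calc (d:ℝ) = μ ^ (Real.logb μ d) := (Real.rpow_logb hμ0 hμne (by positivity)).symm
      _ ≤ μ ^ ((D:ℝ)) := (Real.rpow_le_rpow_left_iff hμ1).2 h1
      _ = μ ^ D := Real.rpow_natCast μ D
  have h2m : (2:ℝ) ≤ μ^m := le_trans (by exact_mod_cast hn) hmun
  -- K
  set L := Nat.log 2 D with hLdef
  set K := L + 4 with hKdef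
  have hp1 : L + 1 ≤ 2^L := Nat.lt_two_pow_self
  have hDp : D + 1 ≤ 2^(L+1) := Nat.lt_pow_succ_log_self (by norm_num) D
  have hpow2 : 2^(L+1) = 2 * 2^L := by rw [pow_succ]; ring
  have hKpow : 2^K = 16 * 2^L := by rw [hKdef, pow_add]; ring
  have h2K : 3*K + D + 2 ≤ 2^K := by
    have := hp1; have := hDp
    omega
  have hK8 : 2^(K-1) ≤ 8*D := by
    have h1 : 2^L ≤ D := Nat.pow_log_le_self 2 (by omega)
    have h2 : K - 1 = L + 3 := by omega
    rw [h2, pow_add]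
    calc 2^L * 2^3 = 8 * 2^L := by ring
      _ ≤ 8 * D := by omega
  -- volume formula
  have hVol : ∀ (i : ℕ) (t σ' : ℝ), Good μ c i t σ' → (volume (Iseg μ i)).toReal = μ^i * t := by
    intro i t σ' hg
    rw [volume_Iseg hμ0 hg, ENNReal.toReal_ofReal]
    exact mul_nonneg (pow_nonneg hμ0.le i) hg.2.1
  obtain ⟨tm, σm, hgm⟩ := good_exists hd hμ1 hμ2 hμ m hm1
  have hm8 : m ≤ 8 * D * m := by
    calc m = 1 * m := (one_mul m).symm
      _ ≤ 8 * D * m := Nat.mul_le_mul_right m (by omega)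
  rcases eq_or_ne tm 0 with h0 | hne
  · refine ⟨m, hm1, hm8, ?_⟩
    obtain ⟨t2, σ2, hg2⟩ := good_exists hd hμ1 hμ2 hμ (2*m) (by omega)
    have ht2m : t2 ≤ tm := good_t_le (by omega) hgm hg2
    have ht20 : 0 ≤ t2 := hg2.2.1
    have ht2z : t2 = 0 := le_antisymm (h0 ▸ ht2m) ht20
    rw [hVol _ _ _ hg2, hVol _ _ _ hgm, ht2z, h0]
    simp
  · by_contra hcon
    push_neg at hcon
    -- strict chain
    have hchain : ∀ k : ℕ, 1 ≤ k → k ≤ K →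
        (((n:ℝ)^3)⁻¹)^k * μ^((2^k - 1) * m) * ((volume (Iseg μ m)).toReal)
          < (volume (Iseg μ (2^k * m))).toReal := by
      intro k
      induction k with
      | zero => omega
      | succ k ih =>
        intro _ hkK
        rcases Nat.eq_zero_or_pos k with rfl | hk1
        · -- base : k+1 = 1
          have hbase := hcon m hm1 hm8
          have he : (2^(0+1) - 1) * m = m := by norm_num
          have he2 : 2^(0+1) * m = 2 * m := by norm_num
          rw [he, he2, pow_one]
          exact hbase
        · have hk : k ≤ K := by omega
          have ihk := ih hk1 hk
          have hlpos : 0 < 2^k * m := Nat.mul_pos (show 0 < 2^k from Nat.pow_pos (by norm_num)) (by omega)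
          have hlle : 2^k * m ≤ 8 * D * m := by
            have h1 : 2^k ≤ 2^(K-1) := Nat.pow_le_pow_right (by norm_num) (by omega)
            calc 2^k * m ≤ 2^(K-1) * m := Nat.mul_le_mul_right m h1
              _ ≤ 8*D*m := Nat.mul_le_mul_right m hK8
          have hfail := hcon (2^k * m) hlpos hlle
          have hidx : 2 * (2^k * m) = 2^(k+1) * m := by rw [pow_succ]; ring
          rw [hidx] at hfail
          have hfac : (0:ℝ) < ((n:ℝ)^3)⁻¹ * μ^(2^k * m) := by positivity
          have hexp : (2^(k+1) - 1) * m = 2^k * m + (2^k - 1) * m := by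
            have h1 : 1 ≤ 2^k := Nat.one_le_pow k 2 (by norm_num)
            obtain ⟨p, hp⟩ := Nat.exists_eq_add_of_le h1
            have h2 : 2^(k+1) = 2 * 2^k := by rw [pow_succ]; ring
            rw [h2, hp]
            have ha : 2 * (1 + p) - 1 = 2*p + 1 := by omega
            have hb : (1 + p) - 1 = p := by omega
            rw [ha, hb]
            ring
          calc (((n:ℝ)^3)⁻¹)^(k+1) * μ^((2^(k+1) - 1) * m) * ((volume (Iseg μ m)).toReal)
              = (((n:ℝ)^3)⁻¹ * μ^(2^k * m)) *
                ((((n:ℝ)^3)⁻¹)^k * μ^((2^k - 1) * m) * ((volume (Iseg μ m)).toReal)) := by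
                rw [hexp, pow_add, pow_succ]
                ring
            _ < (((n:ℝ)^3)⁻¹ * μ^(2^k * m)) * ((volume (Iseg μ (2^k * m))).toReal) :=
                mul_lt_mul_of_pos_left ihk hfac
            _ ≤ (volume (Iseg μ (2^(k+1) * m))).toReal := hfail.le
    -- final contradiction
    obtain ⟨tK, σK, hgK⟩ := good_exists hd hμ1 hμ2 hμ (2^K * m)
      (le_trans hm1 (Nat.le_mul_of_pos_left m (show 0 < 2^K from Nat.pow_pos (by norm_num))))
    have hVK : (volume (Iseg μ (2^K * m))).toReal ≤ 1 := by
      rw [hVol _ _ _ hgK]; exact good_t_upper hμ0 hμ2.le hgK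
    have hVm : (volume (Iseg μ m)).toReal = μ^m * tm := hVol _ _ _ hgm
    have htm_low : 1 ≤ 2*(c:ℝ)^m * tm := good_t_lower hc hgm hne
    have htm0 : 0 ≤ tm := hgm.2.1
    have hch := hchain K (by omega) le_rfl
    rw [hVm] at hch
    have hn3K : (0:ℝ) < (n:ℝ)^(3*K) := by positivity
    have hrw : (((n:ℝ)^3)⁻¹)^K = ((n:ℝ)^(3*K))⁻¹ := by
      rw [inv_pow, ← pow_mul]
    have hexpK : (2^K - 1) * m + m = 2^K * m := by
      have h1 : 1 ≤ 2^K := Nat.one_le_pow K 2 (by norm_num)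
      obtain ⟨p, hp⟩ := Nat.exists_eq_add_of_le h1
      rw [hp]
      have hb : (1 + p) - 1 = p := by omega
      rw [hb]
      ring
    have hineq1 : ((n:ℝ)^(3*K))⁻¹ * (μ^(2^K * m) * tm) < 1 := by
      refine lt_of_lt_of_le ?_ hVK
      refine lt_of_le_of_lt (le_of_eq ?_) hch
      rw [← hexpK, pow_add, ← hrw]
      ring
    have h6 : μ^(2^K * m) * tm < (n:ℝ)^(3*K) := by
      have h61 := mul_lt_mul_of_pos_left hineq1 hn3K
      rw [← mul_assoc, mul_inv_cancel₀ hn3K.ne', one_mul, mul_one] at h61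
      exact h61
    have hcm : (0:ℝ) < (c:ℝ)^m := pow_pos (by exact_mod_cast hc) m
    have h7 : μ^(2^K * m) < 2*(c:ℝ)^m * (n:ℝ)^(3*K) := by
      have e1 : μ^(2^K * m) * 1 ≤ μ^(2^K * m) * (2*(c:ℝ)^m * tm) :=
        mul_le_mul_of_nonneg_left htm_low (pow_nonneg hμ0.le _)
      have e2 : (2*(c:ℝ)^m) * (μ^(2^K * m) * tm) < (2*(c:ℝ)^m) * (n:ℝ)^(3*K) :=
        mul_lt_mul_of_pos_left h6 (by positivity)
      nlinarith [e1, e2]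
    have hcμ : (c:ℝ) = μ * d := by
      rw [hμ]; field_simp
    have e3 : (c:ℝ)^m = μ^m * (d:ℝ)^m := by rw [← mul_pow, ← hcμ]
    have e4 : (d:ℝ)^m ≤ μ^(D*m) := by
      rw [pow_mul μ D m]; exact pow_le_pow_left₀ (by positivity) hdud m
    have e5 : (n:ℝ)^(3*K) ≤ μ^(m*(3*K)) := by
      rw [pow_mul μ m (3*K)]; exact pow_le_pow_left₀ (by positivity) hmun (3*K)
    have s2 : (d:ℝ)^m * (n:ℝ)^(3*K) ≤ μ^(D*m) * μ^(m*(3*K)) :=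
      mul_le_mul e4 e5 (by positivity) (by positivity)
    have s3 : μ^m * ((d:ℝ)^m * (n:ℝ)^(3*K)) ≤ μ^m * (μ^(D*m) * μ^(m*(3*K))) :=
      mul_le_mul_of_nonneg_left s2 (by positivity)
    have s4 : 2 * (μ^m * ((d:ℝ)^m * (n:ℝ)^(3*K))) ≤ μ^m * (μ^m * (μ^(D*m) * μ^(m*(3*K)))) :=
      mul_le_mul h2m s3 (by positivity) (by positivity)
    have e6 : μ^m * (μ^m * (μ^(D*m) * μ^(m*(3*K)))) = μ^((3*K+D+2)*m) := by
      rw [← pow_add, ← pow_add, ← pow_add]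
      congr 1
      ring
    have hfin : μ^(2^K * m) < μ^((3*K+D+2)*m) := by
      calc μ^(2^K * m) < 2*(c:ℝ)^m * (n:ℝ)^(3*K) := h7
        _ = 2 * (μ^m * ((d:ℝ)^m * (n:ℝ)^(3*K))) := by rw [e3]; ring
        _ ≤ μ^m * (μ^m * (μ^(D*m) * μ^(m*(3*K)))) := s4
        _ = μ^((3*K+D+2)*m) := e6
    have hlt : 2^K * m < (3*K+D+2)*m := by
      exact (pow_lt_pow_iff_right₀ hμ1).1 hfin
    have : 2^K < 3*K+D+2 := by
      have hm0 : 0 < m := by omega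
      exact lt_of_mul_lt_mul_right hlt (Nat.zero_le m)
    omega
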